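/- Let k>0, ε>0, θ₁∈(-π/2,π/2), and let θ̃∈ℝ² with |θ̃|=|sin θ₁|. For n∈ℤ², define β_n(k+iε) = √((k+iε)²cos²θ₁ − 2(k+iε)(n·θ̃) − |n|²), where the square root is the principal branch holomorphic on ℂ∖(i·ℝ_{≤0}) (with √t = i√|t| for t<0). Then inf{Im β_n(k+iε) : n∈ℤ²} > 0. -/

import Mathlib

open Complex Real

/-- The square root branch holomorphic on ℂ ∖ (i·ℝ_{≤0}): rotate to the
principal branch (cut on ℝ_{≤0}) by `z ↦ e^{iπ/4}·√(-iz)`.  For `t < 0`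
real this gives `i·√|t|`. -/
noncomputable def cutSqrt (z : ℂ) : ℂ :=
  Complex.exp (Real.pi * Complex.I / 4) * (-Complex.I * z) ^ ((1 : ℂ) / 2)

lemma cutSqrt_im (z : ℂ) :
    (cutSqrt z).im = Real.sqrt 2 / 2 *
      (((-Complex.I * z) ^ ((1:ℂ)/2)).re + ((-Complex.I * z) ^ ((1:ℂ)/2)).im) := by
  unfold cutSqrt
  have h4 : (↑Real.pi * Complex.I / 4) = ((Real.pi/4 : ℝ) : ℂ) * Complex.I := by
    push_cast; ring
  rw [h4, Complex.exp_mul_I, ← Complex.ofReal_cos, ← Complex.ofReal_sin,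
      Real.cos_pi_div_four, Real.sin_pi_div_four]
  simp [Complex.add_im, Complex.mul_im, Complex.mul_re]
  ring

lemma neg_I_mul_re (z : ℂ) : (-Complex.I * z).re = z.im := by simp
lemma neg_I_mul_im (z : ℂ) : (-Complex.I * z).im = -z.re := by simp
lemma abs_neg_I_mul (z : ℂ) : ‖-Complex.I * z‖ = ‖z‖ := by
  simp

lemma cutSqrt_im_of_re_nonpos {z : ℂ} (hz : z.re ≤ 0) :
    (cutSqrt z).im = Real.sqrt 2 / 2 *
      (Real.sqrt ((‖z‖ + z.im)/2) + Real.sqrt ((‖z‖ - z.im)/2)) := by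
  rw [cutSqrt_im]
  have h1 : ((1:ℂ)/2) = (2⁻¹ : ℂ) := by norm_num
  rw [h1, Complex.cpow_inv_two_re,
    Complex.cpow_inv_two_im_eq_sqrt (by simpa using neg_nonneg.mpr hz),
    neg_I_mul_re, abs_neg_I_mul]

lemma cutSqrt_im_of_re_pos {z : ℂ} (hz : 0 < z.re) :
    (cutSqrt z).im = Real.sqrt 2 / 2 *
      (Real.sqrt ((‖z‖ + z.im)/2) - Real.sqrt ((‖z‖ - z.im)/2)) := by
  rw [cutSqrt_im]
  have h1 : ((1:ℂ)/2) = (2⁻¹ : ℂ) := by norm_num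
  rw [h1, Complex.cpow_inv_two_re,
    Complex.cpow_inv_two_im_eq_neg_sqrt (by simpa using hz),
    neg_I_mul_re, abs_neg_I_mul]
  ring

lemma sqrt_sub_lower (m L A B : ℝ) (hm : 0 < m) (hL : 0 < L) (hB : 0 ≤ B)
    (hAB : m ≤ A - B) (hAL : A ≤ L ^ 2) :
    m / (2 * L) ≤ Real.sqrt A - Real.sqrt B := by
  have hA0 : 0 ≤ A := by linarith
  have hsA : Real.sqrt A ^ 2 = A := Real.sq_sqrt hA0
  have hsB : Real.sqrt B ^ 2 = B := Real.sq_sqrt hB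
  have hAL' : Real.sqrt A ≤ L := by
    rw [← Real.sqrt_sq hL.le]; exact Real.sqrt_le_sqrt hAL
  have hBL' : Real.sqrt B ≤ L := by
    rw [← Real.sqrt_sq hL.le]; exact Real.sqrt_le_sqrt (by linarith)
  have hBA : Real.sqrt B ≤ Real.sqrt A := Real.sqrt_le_sqrt (by linarith)
  rw [div_le_iff₀ (by positivity)]
  nlinarith [mul_le_mul_of_nonneg_left (add_le_add hAL' hBL') (sub_nonneg.mpr hBA)]

lemma sqrt_add_lower (x A B : ℝ) (hx : 0 ≤ x) (hA : 0 ≤ A) (hB : 0 ≤ B)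
    (h : x ^ 2 ≤ A + B) : x ≤ Real.sqrt A + Real.sqrt B := by
  have h1 : A + B ≤ (Real.sqrt A + Real.sqrt B) ^ 2 := by
    nlinarith [Real.sq_sqrt hA, Real.sq_sqrt hB,
      mul_nonneg (Real.sqrt_nonneg A) (Real.sqrt_nonneg B)]
  calc x = Real.sqrt (x ^ 2) := (Real.sqrt_sq hx).symm
    _ ≤ Real.sqrt ((Real.sqrt A + Real.sqrt B) ^ 2) := Real.sqrt_le_sqrt (le_trans h h1)
    _ = Real.sqrt A + Real.sqrt B := Real.sqrt_sq (by positivity)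

set_option maxHeartbeats 1600000 in
lemma main_bound (k ε c : ℝ) (hk : 0 < k) (hε : 0 < ε) (hc : 0 < c) (hc1 : c ≤ 1)
    (a R : ℝ) (hR : 0 ≤ R) (haR : a ^ 2 ≤ R) :
    min (Real.sqrt 2 / 2 * Real.sqrt (ε * k * c ^ 2 / 2))
      (min (Real.sqrt 2 / 2 * (ε * k * c ^ 2 / (2 * (Real.sqrt (k ^ 2 + ε ^ 2) + 3 * k))))
        (Real.sqrt 2 / 2 * (ε * c)))
    ≤ (cutSqrt (((k:ℂ) + ε * Complex.I) ^ 2 * (c:ℂ) ^ 2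
        - 2 * ((k:ℂ) + ε * Complex.I) * (a:ℂ) - (R:ℂ))).im := by
  set K₀ := Real.sqrt (k ^ 2 + ε ^ 2) with hK₀
  have hK₀nn : 0 ≤ K₀ := Real.sqrt_nonneg _
  have hK₀sq : K₀ ^ 2 = k ^ 2 + ε ^ 2 := Real.sq_sqrt (by positivity)
  have hc2 : c ^ 2 ≤ 1 := by nlinarith
  set z : ℂ := ((k:ℂ) + ε * Complex.I) ^ 2 * (c:ℂ) ^ 2
      - 2 * ((k:ℂ) + ε * Complex.I) * (a:ℂ) - (R:ℂ) with hz
  have hzre : z.re = (k ^ 2 - ε ^ 2) * c ^ 2 - 2 * k * a - R := by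
    simp [hz, Complex.mul_re, Complex.mul_im, pow_two]; try ring
  have hzim : z.im = 2 * ε * (k * c ^ 2 - a) := by
    simp [hz, Complex.mul_re, Complex.mul_im, pow_two]; try ring
  set M := ‖z‖ with hM
  have habs_nn : 0 ≤ M := norm_nonneg z
  have him_le : z.im ≤ M := Complex.im_le_norm z
  have hnegim_le : -z.im ≤ M := by
    have h1 := Complex.abs_im_le_norm z
    have h2 : -z.im ≤ |z.im| := neg_le_abs _
    linarith
  have hnegre_le : -z.re ≤ M := by
    have h1 := Complex.abs_re_le_norm z
    have h2 : -z.re ≤ |z.re| := neg_le_abs _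
    linarith
  have hAnn : 0 ≤ (M + z.im) / 2 := by linarith
  have hBnn : 0 ≤ (M - z.im) / 2 := by linarith
  rcases le_or_gt a (k * c ^ 2 / 2) with hca | hca
  · -- Case 1 : z.im ≥ ε k c²
    have him : ε * k * c ^ 2 ≤ z.im := by rw [hzim]; nlinarith
    rcases le_or_gt z.re 0 with hre | hre
    · -- 1a
      rw [cutSqrt_im_of_re_nonpos hre]
      refine le_trans (min_le_left _ _) ?_
      rw [← hM]
      gcongr
      have h1 : Real.sqrt (ε * k * c ^ 2 / 2) ≤ Real.sqrt ((M + z.im) / 2) :=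
        Real.sqrt_le_sqrt (by linarith)
      have h2 : 0 ≤ Real.sqrt ((M - z.im) / 2) := Real.sqrt_nonneg _
      linarith
    · -- 1b : z.re > 0, so R is small and |z| ≤ (K₀+3k)²
      rw [cutSqrt_im_of_re_pos hre]
      refine le_trans (le_trans (min_le_right _ _) (min_le_left _ _)) ?_
      rw [← hM]
      set r := Real.sqrt R with hr
      have hrnn : 0 ≤ r := Real.sqrt_nonneg _
      have hrsq : r ^ 2 = R := Real.sq_sqrt hR
      have har : |a| ≤ r := by
        rw [← Real.sqrt_sq_eq_abs, hr]; exact Real.sqrt_le_sqrt haR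
      obtain ⟨har1, har2⟩ := abs_le.mp har
      have hre' : 0 < (k ^ 2 - ε ^ 2) * c ^ 2 - 2 * k * a - R := hzre ▸ hre
      have hRlt : R < k ^ 2 + 2 * k * r := by
        have p1 : -(2 * k * a) ≤ 2 * k * r := by nlinarith
        nlinarith [sq_nonneg ε, sq_nonneg c, sq_nonneg k,
          mul_nonneg (sq_nonneg ε) (sq_nonneg c)]
      have hr3k : r ≤ 3 * k := by nlinarith
      have habsz : M ≤ (K₀ + 3 * k) ^ 2 := by
        have tri : ∀ x y : ℂ, ‖x - y‖ ≤ ‖x‖ + ‖y‖ := by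
          intro x y; simpa [sub_eq_add_neg] using norm_add_le x (-y)
        have hwa : ‖(k:ℂ) + ε * Complex.I‖ = K₀ := by
          rw [hK₀]; exact Complex.norm_add_mul_I k ε
        have h1 : M ≤ ‖((k:ℂ) + ε * Complex.I) ^ 2 * (c:ℂ) ^ 2‖
            + ‖2 * ((k:ℂ) + ε * Complex.I) * (a:ℂ)‖ + ‖(R:ℂ)‖ := by
          rw [hM, hz]
          calc ‖((k:ℂ) + ε * Complex.I) ^ 2 * (c:ℂ) ^ 2
                - 2 * ((k:ℂ) + ε * Complex.I) * (a:ℂ) - (R:ℂ)‖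
              ≤ ‖((k:ℂ) + ε * Complex.I) ^ 2 * (c:ℂ) ^ 2
                - 2 * ((k:ℂ) + ε * Complex.I) * (a:ℂ)‖ + ‖(R:ℂ)‖ := tri _ _
            _ ≤ _ := by gcongr; exact tri _ _
        have e1 : ‖((k:ℂ) + ε * Complex.I) ^ 2 * (c:ℂ) ^ 2‖ = K₀ ^ 2 * c ^ 2 := by
          rw [norm_mul, norm_pow, norm_pow, hwa, Complex.norm_real, Real.norm_eq_abs, _root_.abs_of_pos hc]
        have e2 : ‖2 * ((k:ℂ) + ε * Complex.I) * (a:ℂ)‖ = 2 * K₀ * |a| := by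
          rw [norm_mul, norm_mul, hwa, Complex.norm_real, Real.norm_eq_abs, Complex.norm_two]
        have e3 : ‖(R:ℂ)‖ = R := by
          rw [Complex.norm_real, Real.norm_eq_abs, _root_.abs_of_nonneg hR]
        rw [e1, e2, e3] at h1
        have p1 : K₀ ^ 2 * c ^ 2 ≤ K₀ ^ 2 := by nlinarith [sq_nonneg K₀]
        have p2 : 2 * K₀ * |a| ≤ 2 * K₀ * (3 * k) := by
          have := har.trans hr3k
          nlinarith
        have p3 : R ≤ 9 * k ^ 2 := by nlinarith
        nlinarith
      gcongr
      exact sqrt_sub_lower _ _ _ _ (by positivity) (by positivity) hBnn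
        (by linarith) (by linarith)
  · -- Case 2 : z.re ≤ -ε²c²
    have hre : z.re ≤ -(ε ^ 2 * c ^ 2) := by rw [hzre]; nlinarith
    have hre0 : z.re ≤ 0 := le_trans hre (neg_nonpos.mpr (by positivity))
    rw [cutSqrt_im_of_re_nonpos hre0]
    refine le_trans (le_trans (min_le_right _ _) (min_le_right _ _)) ?_
    rw [← hM]
    gcongr
    exact sqrt_add_lower _ _ _ (by positivity) hAnn hBnn (by nlinarith)

/-- for `k, ε > 0`, `θ₁ ∈ (-π/2, π/2)` and `θ̃ ∈ ℝ²` with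
`|θ̃| = |sin θ₁|`, the imaginary parts of
`β_n(k+iε) = √((k+iε)²cos²θ₁ − 2(k+iε)(n·θ̃) − |n|²)`, `n ∈ ℤ²`, have a
positive lower bound. -/
theorem inf_im_beta_pos (k ε θ₁ : ℝ) (hk : 0 < k) (hε : 0 < ε)
    (hθ₁ : θ₁ ∈ Set.Ioo (-(Real.pi / 2)) (Real.pi / 2))
    (θt : ℝ × ℝ) (hθt : Real.sqrt (θt.1 ^ 2 + θt.2 ^ 2) = |Real.sin θ₁|)
    (β : ℤ × ℤ → ℂ)
    (hβ : ∀ n : ℤ × ℤ, β n =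
      cutSqrt (((k : ℂ) + ε * Complex.I) ^ 2 * (Real.cos θ₁ : ℂ) ^ 2
        - 2 * ((k : ℂ) + ε * Complex.I) * ((n.1 * θt.1 + n.2 * θt.2 : ℝ) : ℂ)
        - (((n.1 : ℝ) ^ 2 + (n.2 : ℝ) ^ 2 : ℝ) : ℂ))) :
    ∃ δ : ℝ, 0 < δ ∧ ∀ n : ℤ × ℤ, δ ≤ (β n).im := by
  have hc : 0 < Real.cos θ₁ := Real.cos_pos_of_mem_Ioo hθ₁
  have hc1 : Real.cos θ₁ ≤ 1 := Real.cos_le_one θ₁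
  refine ⟨min (Real.sqrt 2 / 2 * Real.sqrt (ε * k * Real.cos θ₁ ^ 2 / 2))
      (min (Real.sqrt 2 / 2 *
          (ε * k * Real.cos θ₁ ^ 2 / (2 * (Real.sqrt (k ^ 2 + ε ^ 2) + 3 * k))))
        (Real.sqrt 2 / 2 * (ε * Real.cos θ₁))), ?_, ?_⟩
  · have h1 : 0 ≤ Real.sqrt (k ^ 2 + ε ^ 2) := Real.sqrt_nonneg _
    positivity
  · intro n
    rw [hβ n]
    have hs : θt.1 ^ 2 + θt.2 ^ 2 = Real.sin θ₁ ^ 2 := by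
      have h := congrArg (· ^ 2) hθt
      simpa [Real.sq_sqrt (by positivity : (0:ℝ) ≤ θt.1 ^ 2 + θt.2 ^ 2), sq_abs] using h
    have hsin : Real.sin θ₁ ^ 2 ≤ 1 := Real.sin_sq_le_one θ₁
    have haR : ((n.1 : ℝ) * θt.1 + (n.2 : ℝ) * θt.2) ^ 2
        ≤ ((n.1 : ℝ) ^ 2 + (n.2 : ℝ) ^ 2) := by
      nlinarith [sq_nonneg ((n.1 : ℝ) * θt.2 - (n.2 : ℝ) * θt.1),
        mul_nonneg (add_nonneg (sq_nonneg ((n.1 : ℝ))) (sq_nonneg ((n.2 : ℝ))))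
          (sub_nonneg.mpr hsin)]
    exact main_bound k ε (Real.cos θ₁) hk hε hc hc1 _ _ (by positivity) haR
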